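/- Let k be a commutative ring which is a \mathbb{Q}-algebra, let n be a natural number, and let \pi : Fin\,n \to Fin\,n \to k be an arbitrary matrix of constants. On the polynomial algebra A = k[x_1,\dots,x_n] define the Moyal-type product f \star g := \sum_{m\ge 0} \frac{1}{m!} \sum_{i_1,\dots,i_m,\,j_1,\dots,j_m \in \{1,\dots,n\}} \Big(\prod_{r=1}^m \pi_{i_r j_r}\Big)\, (\partial_{i_1}\cdots\partial_{i_m} f)\,(\partial_{j_1}\cdots\partial_{j_m} g), where \partial_i is the partial derivative with respect to x_i (the sum over m is finite for polynomials f, g since all sufficiently high partial derivatives vanish). Then \star is associative: (f \star g) \star h = f \star (g \star h) for all f, g, h \in A, and 1 \star f = f \star 1 = f. -/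

import Mathlib

open MvPolynomial

/-- Iterated partial derivative `∂_{i_1} ∂_{i_2} ⋯ ∂_{i_m} f` along a list of variable
indices. -/
noncomputable def iterPDeriv {k : Type*} [CommSemiring k] {n : ℕ}
    (l : List (Fin n)) (f : MvPolynomial (Fin n) k) : MvPolynomial (Fin n) k :=
  l.foldr (fun i p => pderiv i p) f


section Basic
variable {k : Type*} [CommSemiring k] {n : ℕ}

lemma pderiv_pderiv (i j : Fin n) (f : MvPolynomial (Fin n) k) :
    pderiv i (pderiv j f) = pderiv j (pderiv i f) := by
  induction f using MvPolynomial.induction_on' with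
  | monomial s a =>
    classical
    simp only [pderiv_monomial]
    rcases eq_or_ne i j with rfl | hij
    · rfl
    · have h1 : (s - fun₀ | j => 1) i = s i := by
        simp [Finsupp.tsub_apply, Finsupp.single_apply, hij.symm]
      have h2 : (s - fun₀ | i => 1) j = s j := by
        simp [Finsupp.tsub_apply, Finsupp.single_apply, hij]
      rw [tsub_right_comm, h1, h2, mul_right_comm]
  | add p q hp hq => simp [hp, hq]

@[simp] lemma iterPDeriv_nil (f : MvPolynomial (Fin n) k) : iterPDeriv [] f = f := rfl

lemma iterPDeriv_cons (i : Fin n) (l : List (Fin n)) (f : MvPolynomial (Fin n) k) :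
    iterPDeriv (i :: l) f = pderiv i (iterPDeriv l f) := rfl

lemma iterPDeriv_append (l1 l2 : List (Fin n)) (f : MvPolynomial (Fin n) k) :
    iterPDeriv (l1 ++ l2) f = iterPDeriv l1 (iterPDeriv l2 f) := by
  simp [iterPDeriv, List.foldr_append]

lemma iterPDeriv_pderiv (l : List (Fin n)) (i : Fin n) (f : MvPolynomial (Fin n) k) :
    iterPDeriv l (pderiv i f) = pderiv i (iterPDeriv l f) := by
  induction l with
  | nil => rfl
  | cons j l ih => rw [iterPDeriv_cons, iterPDeriv_cons, ih, pderiv_pderiv]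

lemma iterPDeriv_iterPDeriv (l1 l2 : List (Fin n)) (f : MvPolynomial (Fin n) k) :
    iterPDeriv l1 (iterPDeriv l2 f) = iterPDeriv l2 (iterPDeriv l1 f) := by
  induction l1 with
  | nil => rfl
  | cons i l ih => rw [iterPDeriv_cons, ih, iterPDeriv_cons, ← iterPDeriv_pderiv]

lemma iterPDeriv_append_comm (l1 l2 : List (Fin n)) (f : MvPolynomial (Fin n) k) :
    iterPDeriv (l1 ++ l2) f = iterPDeriv (l2 ++ l1) f := by
  rw [iterPDeriv_append, iterPDeriv_append, iterPDeriv_iterPDeriv]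

@[simp] lemma iterPDeriv_zero (l : List (Fin n)) : iterPDeriv l (0 : MvPolynomial (Fin n) k) = 0 := by
  induction l with
  | nil => rfl
  | cons i l ih => rw [iterPDeriv_cons, ih]; simp

lemma iterPDeriv_add (l : List (Fin n)) (f g : MvPolynomial (Fin n) k) :
    iterPDeriv l (f + g) = iterPDeriv l f + iterPDeriv l g := by
  induction l with
  | nil => rfl
  | cons i l ih => rw [iterPDeriv_cons, ih]; simp [iterPDeriv_cons]

lemma iterPDeriv_sum {α : Type*} (s : Finset α) (l : List (Fin n))
    (F : α → MvPolynomial (Fin n) k) :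
    iterPDeriv l (∑ x ∈ s, F x) = ∑ x ∈ s, iterPDeriv l (F x) := by
  classical
  induction s using Finset.induction_on with
  | empty => simp
  | insert _ _ h ih => simp [Finset.sum_insert h, iterPDeriv_add, ih]

lemma iterPDeriv_C_mul (l : List (Fin n)) (a : k) (f : MvPolynomial (Fin n) k) :
    iterPDeriv l (C a * f) = C a * iterPDeriv l f := by
  induction l with
  | nil => rfl
  | cons i l ih => rw [iterPDeriv_cons, ih, pderiv_C_mul, iterPDeriv_cons]

lemma totalDegree_pderiv_le (i : Fin n) (f : MvPolynomial (Fin n) k) :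
    (pderiv i f).totalDegree ≤ f.totalDegree - 1 := by
  classical
  conv_lhs => rw [f.as_sum]
  rw [map_sum]
  refine MvPolynomial.totalDegree_finsetSum_le fun s hs => ?_
  rw [pderiv_monomial]
  by_cases h : s i = 0
  · simp [h]
  · refine (totalDegree_monomial_le _ _).trans ?_
    have hle : (Finsupp.single i 1) ≤ s := by
      rw [Finsupp.single_le_iff]; omega
    have : (s - Finsupp.single i 1).sum (fun _ e => e) + 1 = s.sum (fun _ e => e) := by
      have := tsub_add_cancel_of_le hle
      calc (s - Finsupp.single i 1).sum (fun _ e => e) + 1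
          = (s - Finsupp.single i 1).sum (fun _ e => e)
            + (Finsupp.single i 1).sum (fun _ e => e) := by simp
        _ = ((s - Finsupp.single i 1) + Finsupp.single i 1).sum (fun _ e => e) := by
            rw [Finsupp.sum_add_index'] <;> simp
        _ = s.sum (fun _ e => e) := by rw [this]
    have hs' : s.sum (fun _ e => e) ≤ f.totalDegree := le_totalDegree hs
    simp only [Function.id_def] at *
    omega

lemma totalDegree_iterPDeriv_le (l : List (Fin n)) (f : MvPolynomial (Fin n) k) :
    (iterPDeriv l f).totalDegree ≤ f.totalDegree - l.length := by
  induction l with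
  | nil => simp
  | cons i l ih =>
    rw [iterPDeriv_cons]
    have h1 := totalDegree_pderiv_le i (iterPDeriv l f)
    simp only [List.length_cons]
    omega

lemma iterPDeriv_eq_zero_of_lt {l : List (Fin n)} {f : MvPolynomial (Fin n) k}
    (h : f.totalDegree < l.length) : iterPDeriv l f = 0 := by
  cases l with
  | nil => simp at h
  | cons i l =>
    rw [iterPDeriv_cons]
    have h0 : (iterPDeriv l f).totalDegree = 0 := by
      have := totalDegree_iterPDeriv_le l f
      simp only [List.length_cons] at h
      omega
    rw [MvPolynomial.totalDegree_eq_zero_iff] at h0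
    conv_lhs => rw [(iterPDeriv l f).as_sum]
    rw [map_sum]
    refine Finset.sum_eq_zero fun s hs => ?_
    rw [pderiv_monomial, h0 s hs i]
    simp

end Basic

/-- The `m`-th term of the Moyal-type product attached to a constant matrix `π`:
`B_m(f,g) = (1/m!) ∑_{i⃗,j⃗} (∏_r π_{i_r j_r}) (∂_{i_1}⋯∂_{i_m} f)(∂_{j_1}⋯∂_{j_m} g)`. -/
noncomputable def moyalTerm {k : Type*} [CommRing k] [Algebra ℚ k] {n : ℕ}
    (π : Fin n → Fin n → k) (m : ℕ) (f g : MvPolynomial (Fin n) k) :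
    MvPolynomial (Fin n) k :=
  algebraMap ℚ (MvPolynomial (Fin n) k) (1 / m.factorial) *
    ∑ iv : Fin m → Fin n, ∑ jv : Fin m → Fin n,
      C (∏ r : Fin m, π (iv r) (jv r)) *
        iterPDeriv (List.ofFn iv) f * iterPDeriv (List.ofFn jv) g

/-- The Moyal-type product `f ⋆ g = ∑_{m ≥ 0} B_m(f,g)`.  For polynomials `f`, `g` only
finitely many terms are nonzero (all sufficiently high partial derivatives of a polynomial
vanish), so the finitely supported sum `∑ᶠ` computes the actual sum. -/
noncomputable def moyalMul {k : Type*} [CommRing k] [Algebra ℚ k] {n : ℕ}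
    (π : Fin n → Fin n → k) (f g : MvPolynomial (Fin n) k) : MvPolynomial (Fin n) k :=
  ∑ᶠ m : ℕ, moyalTerm π m f g


section Moyal
variable {k : Type*} [CommRing k] [Algebra ℚ k] {n : ℕ} (π : Fin n → Fin n → k)

lemma algebraMap_rat_eq (q : ℚ) :
    algebraMap ℚ (MvPolynomial (Fin n) k) q = C (algebraMap ℚ k q) := by
  exact MvPolynomial.algebraMap_apply q

lemma moyalTerm_eq_zero_left {m : ℕ} {f g : MvPolynomial (Fin n) k}
    (h : f.totalDegree < m) : moyalTerm π m f g = 0 := by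
  rw [moyalTerm]
  rw [Finset.sum_eq_zero, mul_zero]
  intro iv _
  rw [Finset.sum_eq_zero]
  intro jv _
  rw [iterPDeriv_eq_zero_of_lt (by simpa using h), mul_zero, zero_mul]

lemma moyalTerm_eq_zero_right {m : ℕ} {f g : MvPolynomial (Fin n) k}
    (h : g.totalDegree < m) : moyalTerm π m f g = 0 := by
  rw [moyalTerm]
  rw [Finset.sum_eq_zero, mul_zero]
  intro iv _
  rw [Finset.sum_eq_zero]
  intro jv _
  rw [iterPDeriv_eq_zero_of_lt (l := List.ofFn jv) (by simpa using h), mul_zero]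

lemma moyalTerm_zero (f g : MvPolynomial (Fin n) k) : moyalTerm π 0 f g = f * g := by
  rw [moyalTerm, Fintype.sum_unique, Fintype.sum_unique]
  have h1 : (1 / ((Nat.factorial 0 : ℕ) : ℚ)) = 1 := by norm_num
  rw [h1, map_one, one_mul, Fin.prod_univ_zero, map_one, one_mul, List.ofFn_zero,
    iterPDeriv_nil, iterPDeriv_nil]

lemma moyalTerm_totalDegree_le (m : ℕ) (f g : MvPolynomial (Fin n) k) :
    (moyalTerm π m f g).totalDegree ≤ f.totalDegree + g.totalDegree := by
  rw [moyalTerm, algebraMap_rat_eq]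
  refine (totalDegree_mul _ _).trans ?_
  rw [totalDegree_C, zero_add]
  refine totalDegree_finsetSum_le fun iv _ => ?_
  refine totalDegree_finsetSum_le fun jv _ => ?_
  refine (totalDegree_mul _ _).trans ?_
  have h1 := totalDegree_iterPDeriv_le (List.ofFn jv) g
  have h2 : ((C (∏ r : Fin m, π (iv r) (jv r)) : MvPolynomial (Fin n) k) *
      iterPDeriv (List.ofFn iv) f).totalDegree ≤ f.totalDegree := by
    refine (totalDegree_mul _ _).trans ?_
    rw [totalDegree_C, zero_add]
    exact (totalDegree_iterPDeriv_le _ _).trans (Nat.sub_le _ _)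
  have h1' : (iterPDeriv (List.ofFn jv) g).totalDegree ≤ g.totalDegree :=
    h1.trans (Nat.sub_le _ _)
  omega

lemma moyalMul_eq_sum {N : ℕ} {f : MvPolynomial (Fin n) k} (g : MvPolynomial (Fin n) k)
    (h : f.totalDegree < N) :
    moyalMul π f g = ∑ m ∈ Finset.range N, moyalTerm π m f g := by
  rw [moyalMul]
  refine finsum_eq_finset_sum_of_support_subset _ fun m hm => ?_
  simp only [Function.mem_support] at hm
  simp only [Finset.coe_range, Set.mem_Iio]
  by_contra hc
  exact hm (moyalTerm_eq_zero_left π (by omega))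

lemma moyalMul_totalDegree_le (f g : MvPolynomial (Fin n) k) :
    (moyalMul π f g).totalDegree ≤ f.totalDegree + g.totalDegree := by
  rw [moyalMul_eq_sum π g (Nat.lt_succ_self f.totalDegree)]
  exact totalDegree_finsetSum_le fun m _ => moyalTerm_totalDegree_le π m f g

lemma moyalMul_one_left (f : MvPolynomial (Fin n) k) : moyalMul π 1 f = f := by
  rw [moyalMul_eq_sum π f (N := 1) (by simp [totalDegree_one]), Finset.sum_range_one,
    moyalTerm_zero, one_mul]

lemma moyalMul_one_right (f : MvPolynomial (Fin n) k) : moyalMul π f 1 = f := by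
  rw [moyalMul_eq_sum π 1 (Nat.lt_succ_self f.totalDegree)]
  rw [Finset.sum_eq_single_of_mem 0 (by simp)]
  · rw [moyalTerm_zero, mul_one]
  · intro m _ hm
    exact moyalTerm_eq_zero_right π (by simp [totalDegree_one]; omega)

end Moyal

section Key
variable {k : Type*} [CommRing k] [Algebra ℚ k] {n : ℕ}

lemma iterPDeriv_cons' (j : Fin n) (l : List (Fin n)) (h : MvPolynomial (Fin n) k) :
    iterPDeriv (j :: l) h = iterPDeriv l (pderiv j h) := by
  rw [iterPDeriv_cons, iterPDeriv_pderiv]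

lemma iterPDeriv_ofFn_cons {b : ℕ} (i : Fin n) (w : Fin b → Fin n)
    (f : MvPolynomial (Fin n) k) :
    iterPDeriv (List.ofFn (Fin.cons i w)) f = iterPDeriv (List.ofFn w) (pderiv i f) := by
  rw [List.ofFn_succ]
  simp only [Fin.cons_zero, Fin.cons_succ]
  rw [iterPDeriv_cons']

lemma iterPDeriv_middle (l1 l2 : List (Fin n)) (j : Fin n) (h : MvPolynomial (Fin n) k) :
    iterPDeriv (l1 ++ j :: l2) h = iterPDeriv (l1 ++ l2) (pderiv j h) := by
  rw [iterPDeriv_append, iterPDeriv_cons', ← iterPDeriv_append]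

lemma sum_pi_succ {M : Type*} [AddCommMonoid M] {m : ℕ} (φ : (Fin (m+1) → Fin n) → M) :
    ∑ v : Fin (m+1) → Fin n, φ v = ∑ i : Fin n, ∑ v : Fin m → Fin n, φ (Fin.cons i v) := by
  have h1 : ∑ v : Fin (m+1) → Fin n, φ v
      = ∑ p : Fin n × (Fin m → Fin n), φ (Fin.cons p.1 p.2) := by
    refine Fintype.sum_equiv (Fin.consEquiv (fun _ : Fin (m+1) => Fin n)).symm _ _ fun v => ?_
    exact congrArg φ ((Fin.consEquiv (fun _ : Fin (m+1) => Fin n)).apply_symm_apply v).symm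
  rw [h1, Fintype.sum_prod_type]

lemma sum_comm4 {M : Type*} [AddCommMonoid M] {α β γ δ : Type*}
    [Fintype α] [Fintype β] [Fintype γ] [Fintype δ] (φ : α → β → γ → δ → M) :
    ∑ a : α, ∑ b : β, ∑ c : γ, ∑ d : δ, φ a b c d
      = ∑ c : γ, ∑ d : δ, ∑ a : α, ∑ b : β, φ a b c d := by
  trans ∑ p : α × β, ∑ c : γ, ∑ d : δ, φ p.1 p.2 c d
  · rw [Fintype.sum_prod_type]
  trans ∑ p : α × β, ∑ q : γ × δ, φ p.1 p.2 q.1 q.2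
  · exact Finset.sum_congr rfl fun p _ => by rw [Fintype.sum_prod_type]
  rw [Finset.sum_comm]
  trans ∑ q : γ × δ, ∑ a : α, ∑ b : β, φ a b q.1 q.2
  · exact Finset.sum_congr rfl fun q _ => by rw [Fintype.sum_prod_type]
  rw [Fintype.sum_prod_type]

lemma sum_pi_succ_pair {M : Type*} [AddCommMonoid M] {m : ℕ}
    (φ : (Fin (m+1) → Fin n) → (Fin (m+1) → Fin n) → M) :
    ∑ w : Fin (m+1) → Fin n, ∑ x : Fin (m+1) → Fin n, φ w x
      = ∑ i : Fin n, ∑ j : Fin n, ∑ w : Fin m → Fin n, ∑ x : Fin m → Fin n,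
          φ (Fin.cons i w) (Fin.cons j x) := by
  rw [sum_pi_succ (φ := fun w => ∑ x, φ w x)]
  refine Finset.sum_congr rfl fun i _ => ?_
  calc ∑ w : Fin m → Fin n, ∑ x : Fin (m+1) → Fin n, φ (Fin.cons i w) x
      = ∑ w : Fin m → Fin n, ∑ j : Fin n, ∑ x : Fin m → Fin n,
          φ (Fin.cons i w) (Fin.cons j x) :=
        Finset.sum_congr rfl fun w _ => sum_pi_succ _
    _ = _ := Finset.sum_comm

variable (π : Fin n → Fin n → k)

noncomputable def moyalQ (b c : ℕ) (F G h : MvPolynomial (Fin n) k) :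
    MvPolynomial (Fin n) k :=
  ∑ w : Fin b → Fin n, ∑ x : Fin b → Fin n, ∑ y : Fin c → Fin n, ∑ z : Fin c → Fin n,
    C (∏ r : Fin b, π (w r) (x r)) * C (∏ r : Fin c, π (y r) (z r)) *
      iterPDeriv (List.ofFn w) F * iterPDeriv (List.ofFn y) G *
      iterPDeriv (List.ofFn x ++ List.ofFn z) h

lemma moyalR1 {b c : ℕ} (F G h : MvPolynomial (Fin n) k) :
    ∑ i : Fin n, ∑ j : Fin n, C (π i j) * moyalQ π b c (pderiv i F) G (pderiv j h)
      = moyalQ π (b+1) c F G h := by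
  rw [moyalQ, sum_pi_succ_pair]
  refine Finset.sum_congr rfl fun i _ => Finset.sum_congr rfl fun j _ => ?_
  rw [moyalQ, Finset.mul_sum]
  refine Finset.sum_congr rfl fun w _ => ?_
  rw [Finset.mul_sum]
  refine Finset.sum_congr rfl fun x _ => ?_
  rw [Finset.mul_sum]
  refine Finset.sum_congr rfl fun y _ => ?_
  rw [Finset.mul_sum]
  refine Finset.sum_congr rfl fun z _ => ?_
  rw [Fin.prod_univ_succ]
  simp only [Fin.cons_zero, Fin.cons_succ]
  rw [iterPDeriv_ofFn_cons]
  have hl : List.ofFn (Fin.cons j x) ++ List.ofFn z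
      = j :: (List.ofFn x ++ List.ofFn z) := by
    rw [List.ofFn_succ]
    simp only [Fin.cons_zero, Fin.cons_succ, List.cons_append]
  rw [hl, iterPDeriv_cons', map_mul]
  ring

lemma moyalR2 {b c : ℕ} (F G h : MvPolynomial (Fin n) k) :
    ∑ i : Fin n, ∑ j : Fin n, C (π i j) * moyalQ π b c F (pderiv i G) (pderiv j h)
      = moyalQ π b (c+1) F G h := by
  rw [moyalQ]
  have step : ∀ w x : Fin b → Fin n,
      (∑ y : Fin (c+1) → Fin n, ∑ z : Fin (c+1) → Fin n,
        C (∏ r : Fin b, π (w r) (x r)) * C (∏ r : Fin (c+1), π (y r) (z r)) *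
          iterPDeriv (List.ofFn w) F * iterPDeriv (List.ofFn y) G *
          iterPDeriv (List.ofFn x ++ List.ofFn z) h)
      = ∑ i : Fin n, ∑ j : Fin n, ∑ y : Fin c → Fin n, ∑ z : Fin c → Fin n,
          C (π i j) * (C (∏ r : Fin b, π (w r) (x r)) * C (∏ r : Fin c, π (y r) (z r)) *
            iterPDeriv (List.ofFn w) F * iterPDeriv (List.ofFn y) (pderiv i G) *
            iterPDeriv (List.ofFn x ++ List.ofFn z) (pderiv j h)) := by
    intro w x
    rw [sum_pi_succ_pair]
    refine Finset.sum_congr rfl fun i _ => Finset.sum_congr rfl fun j _ =>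
      Finset.sum_congr rfl fun y _ => Finset.sum_congr rfl fun z _ => ?_
    rw [Fin.prod_univ_succ]
    simp only [Fin.cons_zero, Fin.cons_succ]
    rw [iterPDeriv_ofFn_cons]
    have hl : List.ofFn x ++ List.ofFn (Fin.cons j z)
        = List.ofFn x ++ j :: List.ofFn z := by
      rw [List.ofFn_succ]
      simp only [Fin.cons_zero, Fin.cons_succ]
    rw [hl, iterPDeriv_middle, map_mul]
    ring
  calc ∑ i : Fin n, ∑ j : Fin n, C (π i j) * moyalQ π b c F (pderiv i G) (pderiv j h)
      = ∑ i : Fin n, ∑ j : Fin n, ∑ w : Fin b → Fin n, ∑ x : Fin b → Fin n,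
          ∑ y : Fin c → Fin n, ∑ z : Fin c → Fin n,
          C (π i j) * (C (∏ r : Fin b, π (w r) (x r)) * C (∏ r : Fin c, π (y r) (z r)) *
            iterPDeriv (List.ofFn w) F * iterPDeriv (List.ofFn y) (pderiv i G) *
            iterPDeriv (List.ofFn x ++ List.ofFn z) (pderiv j h)) := by
        refine Finset.sum_congr rfl fun i _ => Finset.sum_congr rfl fun j _ => ?_
        rw [moyalQ, Finset.mul_sum]
        exact Finset.sum_congr rfl fun w _ => by
          rw [Finset.mul_sum]
          exact Finset.sum_congr rfl fun x _ => by
            rw [Finset.mul_sum]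
            exact Finset.sum_congr rfl fun y _ => by rw [Finset.mul_sum]
    _ = ∑ w : Fin b → Fin n, ∑ x : Fin b → Fin n, ∑ i : Fin n, ∑ j : Fin n,
          ∑ y : Fin c → Fin n, ∑ z : Fin c → Fin n,
          C (π i j) * (C (∏ r : Fin b, π (w r) (x r)) * C (∏ r : Fin c, π (y r) (z r)) *
            iterPDeriv (List.ofFn w) F * iterPDeriv (List.ofFn y) (pderiv i G) *
            iterPDeriv (List.ofFn x ++ List.ofFn z) (pderiv j h)) := sum_comm4 _
    _ = _ := Finset.sum_congr rfl fun w _ => Finset.sum_congr rfl fun x _ => (step w x).symm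

lemma sum2_add {M : Type*} [AddCommMonoid M] {α β : Type*} [Fintype α] [Fintype β]
    (f g : α → β → M) :
    ∑ a : α, ∑ b : β, (f a b + g a b)
      = (∑ a : α, ∑ b : β, f a b) + ∑ a : α, ∑ b : β, g a b := by
  rw [← Finset.sum_add_distrib]
  exact Finset.sum_congr rfl fun a _ => Finset.sum_add_distrib

lemma mul_sum2 {R : Type*} [NonUnitalNonAssocSemiring R] {α β : Type*} [Fintype α] [Fintype β]
    (c : R) (f : α → β → R) :
    c * ∑ a : α, ∑ b : β, f a b = ∑ a : α, ∑ b : β, c * f a b := by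
  rw [Finset.mul_sum]
  exact Finset.sum_congr rfl fun a _ => Finset.mul_sum _ _ _

lemma smul_sum2 {M : Type*} [AddCommMonoid M] {α β : Type*} [Fintype α] [Fintype β]
    (c : ℕ) (f : α → β → M) :
    ∑ a : α, ∑ b : β, c • f a b = c • ∑ a : α, ∑ b : β, f a b := by
  refine Eq.trans ?_ (Finset.smul_sum).symm
  exact Finset.sum_congr rfl fun a _ => (Finset.smul_sum).symm

lemma sum_sum_comm_finset {M : Type*} [AddCommMonoid M] {α β γ : Type*} [Fintype α] [Fintype β]
    (s : Finset γ) (f : α → β → γ → M) :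
    ∑ a : α, ∑ b : β, ∑ c ∈ s, f a b c = ∑ c ∈ s, ∑ a : α, ∑ b : β, f a b c := by
  calc ∑ a : α, ∑ b : β, ∑ c ∈ s, f a b c
      = ∑ a : α, ∑ c ∈ s, ∑ b : β, f a b c :=
        Finset.sum_congr rfl fun a _ => Finset.sum_comm
    _ = ∑ c ∈ s, ∑ a : α, ∑ b : β, f a b c := Finset.sum_comm

lemma pascal_step {M : Type*} [AddCommMonoid M] (T : ℕ → ℕ → M) (m : ℕ) :
    (∑ b ∈ Finset.range (m+1), (m.choose b) • T (b+1) (m - b))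
      + ∑ b ∈ Finset.range (m+1), (m.choose b) • T b (m - b + 1)
    = ∑ b ∈ Finset.range (m+2), ((m+1).choose b) • T b (m + 1 - b) := by
  have hG : ∀ b ∈ Finset.range (m+1), ((m+1).choose (b+1)) • T (b+1) (m + 1 - (b+1))
      = (m.choose b) • T (b+1) (m-b) + (m.choose (b+1)) • T (b+1) (m-b) := by
    intro b hb
    have h1 : m + 1 - (b+1) = m - b := by omega
    rw [h1, Nat.choose_succ_succ, add_smul]
  conv_rhs => rw [show m + 2 = (m+1) + 1 from rfl, Finset.sum_range_succ']
  rw [Finset.sum_congr rfl hG, Finset.sum_add_distrib]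
  have hB : ∑ b ∈ Finset.range (m+1), (m.choose b) • T b (m - b + 1)
      = ∑ b ∈ Finset.range m, (m.choose (b+1)) • T (b+1) (m - (b+1) + 1)
        + (m.choose 0) • T 0 (m - 0 + 1) := Finset.sum_range_succ' _ _
  have hC : ∑ b ∈ Finset.range (m+1), (m.choose (b+1)) • T (b+1) (m - b)
      = ∑ b ∈ Finset.range m, (m.choose (b+1)) • T (b+1) (m - b) := by
    rw [Finset.sum_range_succ, Nat.choose_succ_self, zero_smul, add_zero]
  have hD : ∑ b ∈ Finset.range m, (m.choose (b+1)) • T (b+1) (m - (b+1) + 1)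
      = ∑ b ∈ Finset.range m, (m.choose (b+1)) • T (b+1) (m - b) := by
    refine Finset.sum_congr rfl fun b hb => ?_
    have : m - (b+1) + 1 = m - b := by
      simp only [Finset.mem_range] at hb; omega
    rw [this]
  rw [hB, hC, hD]
  simp only [Nat.choose_zero_right, one_smul, Nat.sub_zero]
  abel

set_option maxHeartbeats 2000000 in
lemma moyal_key (m : ℕ) (F G h : MvPolynomial (Fin n) k) :
    (∑ iv : Fin m → Fin n, ∑ jv : Fin m → Fin n,
      C (∏ r : Fin m, π (iv r) (jv r)) * iterPDeriv (List.ofFn iv) (F * G) *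
        iterPDeriv (List.ofFn jv) h)
    = ∑ b ∈ Finset.range (m+1), (m.choose b) • moyalQ π b (m - b) F G h := by
  induction m generalizing F G h with
  | zero =>
    rw [Finset.sum_range_one]
    simp only [Nat.sub_self, Nat.choose_self, one_smul]
    rw [moyalQ, Fintype.sum_unique, Fintype.sum_unique, Fintype.sum_unique,
      Fintype.sum_unique, Fintype.sum_unique, Fintype.sum_unique]
    simp only [Fin.prod_univ_zero, map_one, List.ofFn_zero, List.nil_append,
      iterPDeriv_nil, one_mul]
  | succ m ih =>
    rw [sum_pi_succ_pair]
    beta_reduce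
    have hterm : ∀ (i j : Fin n) (iv jv : Fin m → Fin n),
        C (∏ r : Fin (m+1), π ((Fin.cons i iv : Fin (m+1) → Fin n) r)
            ((Fin.cons j jv : Fin (m+1) → Fin n) r)) *
          iterPDeriv (List.ofFn (Fin.cons i iv : Fin (m+1) → Fin n)) (F * G) *
          iterPDeriv (List.ofFn (Fin.cons j jv : Fin (m+1) → Fin n)) h
        = C (π i j) * (C (∏ r : Fin m, π (iv r) (jv r)) *
            iterPDeriv (List.ofFn iv) (pderiv i F * G) *
            iterPDeriv (List.ofFn jv) (pderiv j h))
          + C (π i j) * (C (∏ r : Fin m, π (iv r) (jv r)) *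
            iterPDeriv (List.ofFn iv) (F * pderiv i G) *
            iterPDeriv (List.ofFn jv) (pderiv j h)) := by
      intro i j iv jv
      rw [Fin.prod_univ_succ]
      simp only [Fin.cons_zero, Fin.cons_succ]
      rw [iterPDeriv_ofFn_cons, iterPDeriv_ofFn_cons, pderiv_mul, iterPDeriv_add, map_mul]
      ring
    have step1 : ∀ i j : Fin n,
        (∑ iv : Fin m → Fin n, ∑ jv : Fin m → Fin n,
          C (∏ r : Fin (m+1), π ((Fin.cons i iv : Fin (m+1) → Fin n) r)
              ((Fin.cons j jv : Fin (m+1) → Fin n) r)) *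
            iterPDeriv (List.ofFn (Fin.cons i iv : Fin (m+1) → Fin n)) (F * G) *
            iterPDeriv (List.ofFn (Fin.cons j jv : Fin (m+1) → Fin n)) h)
        = C (π i j) * (∑ iv : Fin m → Fin n, ∑ jv : Fin m → Fin n,
              C (∏ r : Fin m, π (iv r) (jv r)) *
                iterPDeriv (List.ofFn iv) (pderiv i F * G) *
                iterPDeriv (List.ofFn jv) (pderiv j h))
          + C (π i j) * (∑ iv : Fin m → Fin n, ∑ jv : Fin m → Fin n,
              C (∏ r : Fin m, π (iv r) (jv r)) *
                iterPDeriv (List.ofFn iv) (F * pderiv i G) *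
                iterPDeriv (List.ofFn jv) (pderiv j h)) := by
      intro i j
      refine ((Finset.sum_congr rfl fun iv _ => Finset.sum_congr rfl fun jv _ =>
        hterm i j iv jv).trans ((sum2_add _ _).trans ?_))
      rw [← mul_sum2, ← mul_sum2]
    have step2 : ∀ i j : Fin n,
        C (π i j) * (∑ iv : Fin m → Fin n, ∑ jv : Fin m → Fin n,
            C (∏ r : Fin m, π (iv r) (jv r)) *
              iterPDeriv (List.ofFn iv) (pderiv i F * G) *
              iterPDeriv (List.ofFn jv) (pderiv j h))
        = ∑ b ∈ Finset.range (m+1),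
            (m.choose b) • (C (π i j) * moyalQ π b (m - b) (pderiv i F) G (pderiv j h)) := by
      intro i j
      rw [ih, Finset.mul_sum]
      exact Finset.sum_congr rfl fun b _ =>
        mul_smul_comm (m.choose b) (C (π i j)) _
    have step3 : ∀ i j : Fin n,
        C (π i j) * (∑ iv : Fin m → Fin n, ∑ jv : Fin m → Fin n,
            C (∏ r : Fin m, π (iv r) (jv r)) *
              iterPDeriv (List.ofFn iv) (F * pderiv i G) *
              iterPDeriv (List.ofFn jv) (pderiv j h))
        = ∑ b ∈ Finset.range (m+1),
            (m.choose b) • (C (π i j) * moyalQ π b (m - b) F (pderiv i G) (pderiv j h)) := by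
      intro i j
      rw [ih, Finset.mul_sum]
      exact Finset.sum_congr rfl fun b _ =>
        mul_smul_comm (m.choose b) (C (π i j)) _
    have step4 : (∑ i : Fin n, ∑ j : Fin n, ∑ b ∈ Finset.range (m+1),
            (m.choose b) • (C (π i j) * moyalQ π b (m - b) (pderiv i F) G (pderiv j h)))
        = ∑ b ∈ Finset.range (m+1), (m.choose b) • moyalQ π (b+1) (m - b) F G h := by
      refine (sum_sum_comm_finset _ _).trans (Finset.sum_congr rfl fun b _ => ?_)
      refine ((Finset.sum_congr rfl fun i _ => Finset.sum_congr rfl fun j _ => rfl).trans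
        ((smul_sum2 _ _).trans ?_))
      rw [moyalR1]
    have step5 : (∑ i : Fin n, ∑ j : Fin n, ∑ b ∈ Finset.range (m+1),
            (m.choose b) • (C (π i j) * moyalQ π b (m - b) F (pderiv i G) (pderiv j h)))
        = ∑ b ∈ Finset.range (m+1), (m.choose b) • moyalQ π b (m - b + 1) F G h := by
      refine (sum_sum_comm_finset _ _).trans (Finset.sum_congr rfl fun b _ => ?_)
      refine ((Finset.sum_congr rfl fun i _ => Finset.sum_congr rfl fun j _ => rfl).trans
        ((smul_sum2 _ _).trans ?_))
      rw [moyalR2]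
    calc ∑ i : Fin n, ∑ j : Fin n, ∑ iv : Fin m → Fin n, ∑ jv : Fin m → Fin n,
          C (∏ r : Fin (m+1), π ((Fin.cons i iv : Fin (m+1) → Fin n) r)
              ((Fin.cons j jv : Fin (m+1) → Fin n) r)) *
            iterPDeriv (List.ofFn (Fin.cons i iv : Fin (m+1) → Fin n)) (F * G) *
            iterPDeriv (List.ofFn (Fin.cons j jv : Fin (m+1) → Fin n)) h
        = ∑ i : Fin n, ∑ j : Fin n,
            ((∑ b ∈ Finset.range (m+1),
              (m.choose b) • (C (π i j) * moyalQ π b (m - b) (pderiv i F) G (pderiv j h)))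
            + ∑ b ∈ Finset.range (m+1),
              (m.choose b) • (C (π i j) * moyalQ π b (m - b) F (pderiv i G) (pderiv j h))) :=
          Finset.sum_congr rfl fun i _ => Finset.sum_congr rfl fun j _ =>
            (step1 i j).trans (by rw [step2 i j, step3 i j])
      _ = (∑ i : Fin n, ∑ j : Fin n, ∑ b ∈ Finset.range (m+1),
              (m.choose b) • (C (π i j) * moyalQ π b (m - b) (pderiv i F) G (pderiv j h)))
          + ∑ i : Fin n, ∑ j : Fin n, ∑ b ∈ Finset.range (m+1),
              (m.choose b) • (C (π i j) * moyalQ π b (m - b) F (pderiv i G) (pderiv j h)) :=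
          sum2_add _ _
      _ = (∑ b ∈ Finset.range (m+1), (m.choose b) • moyalQ π (b+1) (m - b) F G h)
          + ∑ b ∈ Finset.range (m+1), (m.choose b) • moyalQ π b (m - b + 1) F G h := by
          rw [step4, step5]
      _ = _ := pascal_step (fun b c => moyalQ π b c F G h) m

lemma sum2_mul {R : Type*} [NonUnitalNonAssocSemiring R] {α β : Type*} [Fintype α] [Fintype β]
    (e : R) (f : α → β → R) :
    (∑ a : α, ∑ b : β, f a b) * e = ∑ a : α, ∑ b : β, f a b * e := by
  rw [Finset.sum_mul]
  exact Finset.sum_congr rfl fun a _ => Finset.sum_mul _ _ _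

lemma mul_sum2_mul {R : Type*} [NonUnitalNonAssocSemiring R] {α β : Type*} [Fintype α] [Fintype β]
    (p e : R) (S : α → β → R) :
    p * (∑ a : α, ∑ b : β, S a b) * e = ∑ a : α, ∑ b : β, p * S a b * e := by
  calc p * (∑ a : α, ∑ b : β, S a b) * e
      = (∑ a : α, ∑ b : β, p * S a b) * e := by rw [mul_sum2]
    _ = ∑ a : α, ∑ b : β, p * S a b * e := sum2_mul _ _

lemma shuffle {R : Type*} [CommRing R] {α β γ δ : Type*}
    [Fintype α] [Fintype β] [Fintype γ] [Fintype δ]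
    (c : R) (P : γ → δ → R) (E : δ → R) (K : α → β → R) (D : γ → α → β → R) :
    ∑ i : γ, ∑ j : δ, P i j * (c * ∑ u : α, ∑ v : β, K u v * D i u v) * E j
      = c * ∑ u : α, ∑ v : β, K u v * ∑ i : γ, ∑ j : δ, P i j * D i u v * E j := by
  calc ∑ i : γ, ∑ j : δ, P i j * (c * ∑ u : α, ∑ v : β, K u v * D i u v) * E j
      = ∑ i : γ, ∑ j : δ, ∑ u : α, ∑ v : β, c * (K u v * (P i j * D i u v * E j)) := by
        refine Finset.sum_congr rfl fun i _ => Finset.sum_congr rfl fun j _ => ?_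
        rw [mul_sum2 c (fun u v => K u v * D i u v),
          mul_sum2_mul (P i j) (E j) (fun u v => c * (K u v * D i u v))]
        exact Finset.sum_congr rfl fun u _ => Finset.sum_congr rfl fun v _ => by ring
    _ = ∑ u : α, ∑ v : β, ∑ i : γ, ∑ j : δ, c * (K u v * (P i j * D i u v * E j)) :=
        sum_comm4 _
    _ = ∑ u : α, ∑ v : β, c * (K u v * ∑ i : γ, ∑ j : δ, P i j * D i u v * E j) := by
        refine Finset.sum_congr rfl fun u _ => Finset.sum_congr rfl fun v _ => ?_
        conv_rhs => rw [mul_sum2 (K u v) (fun i j => P i j * D i u v * E j),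
          mul_sum2 c (fun i j => K u v * (P i j * D i u v * E j))]
    _ = c * ∑ u : α, ∑ v : β, K u v * ∑ i : γ, ∑ j : δ, P i j * D i u v * E j := by
        rw [mul_sum2 c (fun u v => K u v * ∑ i : γ, ∑ j : δ, P i j * D i u v * E j)]

noncomputable def moyalW (a b c : ℕ) (f g h : MvPolynomial (Fin n) k) :
    MvPolynomial (Fin n) k :=
  algebraMap ℚ (MvPolynomial (Fin n) k)
      (1 / (a.factorial * b.factorial * c.factorial : ℚ)) *
    ∑ u : Fin a → Fin n, ∑ v : Fin a → Fin n,
      C (∏ r : Fin a, π (u r) (v r)) *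
        moyalQ π b c (iterPDeriv (List.ofFn u) f) (iterPDeriv (List.ofFn v) g) h

lemma moyal_mixed (p m : ℕ) (f g h : MvPolynomial (Fin n) k) :
    moyalTerm π m (moyalTerm π p f g) h
      = ∑ b ∈ Finset.range (m+1), moyalW π p b (m - b) f g h := by
  have hD : ∀ l : List (Fin n), iterPDeriv l (moyalTerm π p f g)
      = C (algebraMap ℚ k (1 / p.factorial)) *
          ∑ u : Fin p → Fin n, ∑ v : Fin p → Fin n,
            C (∏ r : Fin p, π (u r) (v r)) *
              iterPDeriv l (iterPDeriv (List.ofFn u) f * iterPDeriv (List.ofFn v) g) := by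
    intro l
    rw [moyalTerm, algebraMap_rat_eq, iterPDeriv_C_mul, iterPDeriv_sum]
    congr 1
    refine Finset.sum_congr rfl fun u _ => ?_
    rw [iterPDeriv_sum]
    refine Finset.sum_congr rfl fun v _ => ?_
    rw [mul_assoc, iterPDeriv_C_mul]
  calc moyalTerm π m (moyalTerm π p f g) h
      = algebraMap ℚ (MvPolynomial (Fin n) k) (1 / m.factorial) *
          ∑ iv : Fin m → Fin n, ∑ jv : Fin m → Fin n,
            C (∏ r : Fin m, π (iv r) (jv r)) *
              (C (algebraMap ℚ k (1 / p.factorial)) *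
                ∑ u : Fin p → Fin n, ∑ v : Fin p → Fin n,
                  C (∏ r : Fin p, π (u r) (v r)) *
                    iterPDeriv (List.ofFn iv)
                      (iterPDeriv (List.ofFn u) f * iterPDeriv (List.ofFn v) g)) *
              iterPDeriv (List.ofFn jv) h := by
        rw [moyalTerm]
        refine congrArg (algebraMap ℚ (MvPolynomial (Fin n) k) (1 / m.factorial) * ·) ?_
        refine Finset.sum_congr rfl fun iv _ => Finset.sum_congr rfl fun jv _ => ?_
        rw [hD (List.ofFn iv)]
    _ = algebraMap ℚ (MvPolynomial (Fin n) k) (1 / m.factorial) *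
          (C (algebraMap ℚ k (1 / p.factorial)) *
            ∑ u : Fin p → Fin n, ∑ v : Fin p → Fin n,
              C (∏ r : Fin p, π (u r) (v r)) *
                ∑ iv : Fin m → Fin n, ∑ jv : Fin m → Fin n,
                  C (∏ r : Fin m, π (iv r) (jv r)) *
                    iterPDeriv (List.ofFn iv)
                      (iterPDeriv (List.ofFn u) f * iterPDeriv (List.ofFn v) g) *
                    iterPDeriv (List.ofFn jv) h) := by
        rw [shuffle (C (algebraMap ℚ k (1 / p.factorial)))
          (fun iv jv => C (∏ r : Fin m, π (iv r) (jv r)))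
          (fun jv => iterPDeriv (List.ofFn jv) h)
          (fun u v => C (∏ r : Fin p, π (u r) (v r)))
          (fun iv u v => iterPDeriv (List.ofFn iv)
            (iterPDeriv (List.ofFn u) f * iterPDeriv (List.ofFn v) g))]
    _ = algebraMap ℚ (MvPolynomial (Fin n) k) (1 / m.factorial) *
          (C (algebraMap ℚ k (1 / p.factorial)) *
            ∑ u : Fin p → Fin n, ∑ v : Fin p → Fin n,
              C (∏ r : Fin p, π (u r) (v r)) *
                ∑ b ∈ Finset.range (m+1), (m.choose b) •
                  moyalQ π b (m - b) (iterPDeriv (List.ofFn u) f)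
                    (iterPDeriv (List.ofFn v) g) h) := by
        refine congrArg (algebraMap ℚ (MvPolynomial (Fin n) k) (1 / m.factorial) * ·) ?_
        refine congrArg (C (algebraMap ℚ k (1 / p.factorial)) * ·) ?_
        refine Finset.sum_congr rfl fun u _ => Finset.sum_congr rfl fun v _ => ?_
        rw [moyal_key]
    _ = ∑ b ∈ Finset.range (m+1), moyalW π p b (m - b) f g h := by
        rw [mul_sum2 (C (algebraMap ℚ k (1 / p.factorial)))
          (fun u v => C (∏ r : Fin p, π (u r) (v r)) * ∑ b ∈ Finset.range (m+1),
            (m.choose b) • moyalQ π b (m - b) (iterPDeriv (List.ofFn u) f)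
              (iterPDeriv (List.ofFn v) g) h)]
        rw [mul_sum2 (algebraMap ℚ (MvPolynomial (Fin n) k) (1 / m.factorial)) _]
        have inner : ∀ (u v : Fin p → Fin n),
            algebraMap ℚ (MvPolynomial (Fin n) k) (1 / m.factorial) *
              (C (algebraMap ℚ k (1 / p.factorial)) *
                (C (∏ r : Fin p, π (u r) (v r)) *
                  ∑ b ∈ Finset.range (m+1), (m.choose b) •
                    moyalQ π b (m - b) (iterPDeriv (List.ofFn u) f)
                      (iterPDeriv (List.ofFn v) g) h))
            = ∑ b ∈ Finset.range (m+1),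
                algebraMap ℚ (MvPolynomial (Fin n) k)
                    (1 / (p.factorial * b.factorial * (m-b).factorial : ℚ)) *
                  (C (∏ r : Fin p, π (u r) (v r)) *
                    moyalQ π b (m - b) (iterPDeriv (List.ofFn u) f)
                      (iterPDeriv (List.ofFn v) g) h) := by
          intro u v
          rw [Finset.mul_sum, Finset.mul_sum, Finset.mul_sum]
          refine Finset.sum_congr rfl fun b hb => ?_
          have hbm : b ≤ m := by
            simp only [Finset.mem_range] at hb; omega
          have hm0 : ((m.factorial : ℕ) : ℚ) ≠ 0 := Nat.cast_ne_zero.mpr m.factorial_ne_zero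
          have hp0 : ((p.factorial : ℕ) : ℚ) ≠ 0 := Nat.cast_ne_zero.mpr p.factorial_ne_zero
          have hb0 : ((b.factorial : ℕ) : ℚ) ≠ 0 := Nat.cast_ne_zero.mpr b.factorial_ne_zero
          have hc0 : (((m-b).factorial : ℕ) : ℚ) ≠ 0 :=
            Nat.cast_ne_zero.mpr (m-b).factorial_ne_zero
          have hq : (1/(m.factorial : ℚ)) * (1/(p.factorial : ℚ)) * (m.choose b : ℚ)
              = 1/((p.factorial : ℚ) * (b.factorial : ℚ) * ((m-b).factorial : ℚ)) := by
            rw [Nat.cast_choose ℚ hbm]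
            field_simp
          rw [← algebraMap_rat_eq, nsmul_eq_mul,
            show ((m.choose b : ℕ) : MvPolynomial (Fin n) k)
              = algebraMap ℚ (MvPolynomial (Fin n) k) (m.choose b : ℚ) from
              (map_natCast _ _).symm]
          calc algebraMap ℚ (MvPolynomial (Fin n) k) (1 / m.factorial) *
                (algebraMap ℚ (MvPolynomial (Fin n) k) (1 / p.factorial) *
                  (C (∏ r : Fin p, π (u r) (v r)) *
                    (algebraMap ℚ (MvPolynomial (Fin n) k) (m.choose b : ℚ) *
                      moyalQ π b (m - b) (iterPDeriv (List.ofFn u) f)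
                        (iterPDeriv (List.ofFn v) g) h)))
              = (algebraMap ℚ (MvPolynomial (Fin n) k) (1 / m.factorial) *
                  algebraMap ℚ (MvPolynomial (Fin n) k) (1 / p.factorial) *
                  algebraMap ℚ (MvPolynomial (Fin n) k) (m.choose b : ℚ)) *
                (C (∏ r : Fin p, π (u r) (v r)) *
                  moyalQ π b (m - b) (iterPDeriv (List.ofFn u) f)
                    (iterPDeriv (List.ofFn v) g) h) := by ring
            _ = _ := by rw [← map_mul, ← map_mul, hq]
        rw [Finset.sum_congr rfl fun u (_ : u ∈ (Finset.univ : Finset (Fin p → Fin n))) =>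
          Finset.sum_congr rfl fun v (_ : v ∈ (Finset.univ : Finset (Fin p → Fin n))) =>
            inner u v]
        rw [sum_sum_comm_finset (Finset.range (m+1))
          (fun u v b => algebraMap ℚ (MvPolynomial (Fin n) k)
              (1 / (p.factorial * b.factorial * (m-b).factorial : ℚ)) *
            (C (∏ r : Fin p, π (u r) (v r)) *
              moyalQ π b (m - b) (iterPDeriv (List.ofFn u) f)
                (iterPDeriv (List.ofFn v) g) h))]
        refine Finset.sum_congr rfl fun b _ => ?_
        rw [moyalW, ← mul_sum2]

lemma moyalQ_term_zero_F {b c : ℕ} {F : MvPolynomial (Fin n) k} (G h : MvPolynomial (Fin n) k)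
    (hF : ∀ w : Fin b → Fin n, iterPDeriv (List.ofFn w) F = 0) :
    moyalQ π b c F G h = 0 := by
  rw [moyalQ]
  refine Finset.sum_eq_zero fun w _ => Finset.sum_eq_zero fun x _ =>
    Finset.sum_eq_zero fun y _ => Finset.sum_eq_zero fun z _ => ?_
  rw [hF w, mul_zero, zero_mul, zero_mul]

lemma moyalQ_term_zero_G {b c : ℕ} {G : MvPolynomial (Fin n) k} (F h : MvPolynomial (Fin n) k)
    (hG : ∀ y : Fin c → Fin n, iterPDeriv (List.ofFn y) G = 0) :
    moyalQ π b c F G h = 0 := by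
  rw [moyalQ]
  refine Finset.sum_eq_zero fun w _ => Finset.sum_eq_zero fun x _ =>
    Finset.sum_eq_zero fun y _ => Finset.sum_eq_zero fun z _ => ?_
  rw [hG y, mul_zero, zero_mul]

lemma moyalQ_term_zero_h {b c : ℕ} {h : MvPolynomial (Fin n) k} (F G : MvPolynomial (Fin n) k)
    (hh : h.totalDegree < b + c) :
    moyalQ π b c F G h = 0 := by
  rw [moyalQ]
  refine Finset.sum_eq_zero fun w _ => Finset.sum_eq_zero fun x _ =>
    Finset.sum_eq_zero fun y _ => Finset.sum_eq_zero fun z _ => ?_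
  rw [iterPDeriv_eq_zero_of_lt (l := List.ofFn x ++ List.ofFn z)
    (by simpa using hh), mul_zero]

lemma iter_iter_zero {a b : ℕ} {f : MvPolynomial (Fin n) k}
    (hf : f.totalDegree < a + b) (u : Fin a → Fin n) (w : Fin b → Fin n) :
    iterPDeriv (List.ofFn w) (iterPDeriv (List.ofFn u) f) = 0 := by
  rw [← iterPDeriv_append, iterPDeriv_eq_zero_of_lt]
  simp only [List.length_append, List.length_ofFn]
  omega

lemma moyalW_eq_zero_f {a b c : ℕ} {f : MvPolynomial (Fin n) k}
    (g h : MvPolynomial (Fin n) k) (hf : f.totalDegree < a + b) :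
    moyalW π a b c f g h = 0 := by
  rw [moyalW]
  rw [Finset.sum_eq_zero, mul_zero]
  intro u _
  refine Finset.sum_eq_zero fun v _ => ?_
  rw [moyalQ_term_zero_F π _ _ (fun w => iter_iter_zero (by omega) u w), mul_zero]

lemma moyalW_eq_zero_g {a b c : ℕ} {g : MvPolynomial (Fin n) k}
    (f h : MvPolynomial (Fin n) k) (hg : g.totalDegree < a + c) :
    moyalW π a b c f g h = 0 := by
  rw [moyalW]
  rw [Finset.sum_eq_zero, mul_zero]
  intro u _
  refine Finset.sum_eq_zero fun v _ => ?_
  rw [moyalQ_term_zero_G π _ _ (fun y => iter_iter_zero (by omega) v y), mul_zero]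

lemma moyalW_eq_zero_h {a b c : ℕ} {h : MvPolynomial (Fin n) k}
    (f g : MvPolynomial (Fin n) k) (hh : h.totalDegree < b + c) :
    moyalW π a b c f g h = 0 := by
  rw [moyalW]
  rw [Finset.sum_eq_zero, mul_zero]
  intro u _
  refine Finset.sum_eq_zero fun v _ => ?_
  rw [moyalQ_term_zero_h π _ _ hh, mul_zero]

lemma triangle_reindex {M : Type*} [AddCommMonoid M] (N : ℕ) (F : ℕ → ℕ → M) :
    ∑ m ∈ Finset.range N, ∑ b ∈ Finset.range (m+1), F b (m - b)
      = ∑ b ∈ Finset.range N, ∑ c ∈ Finset.range (N - b), F b c := by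
  induction N with
  | zero => simp
  | succ N ih =>
    rw [Finset.sum_range_succ, ih]
    have hsplit : ∑ b ∈ Finset.range (N+1), ∑ c ∈ Finset.range (N + 1 - b), F b c
        = ∑ b ∈ Finset.range N, ∑ c ∈ Finset.range (N + 1 - b), F b c
          + ∑ c ∈ Finset.range 1, F N c := by
      rw [Finset.sum_range_succ]
      have : N + 1 - N = 1 := by omega
      rw [this]
    rw [hsplit]
    have hrow : ∀ b ∈ Finset.range N,
        ∑ c ∈ Finset.range (N + 1 - b), F b c
          = ∑ c ∈ Finset.range (N - b), F b c + F b (N - b) := by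
      intro b hb
      simp only [Finset.mem_range] at hb
      have : N + 1 - b = (N - b) + 1 := by omega
      rw [this, Finset.sum_range_succ]
    rw [Finset.sum_congr rfl hrow, Finset.sum_add_distrib, Finset.sum_range_one,
      Finset.sum_range_succ]
    simp only [Nat.sub_self]
    abel

lemma triangle_rect {M : Type*} [AddCommMonoid M] (N : ℕ) (F : ℕ → ℕ → M)
    (hF : ∀ b c, N ≤ b + c → F b c = 0) :
    ∑ m ∈ Finset.range N, ∑ b ∈ Finset.range (m+1), F b (m - b)
      = ∑ b ∈ Finset.range N, ∑ c ∈ Finset.range N, F b c := by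
  rw [triangle_reindex]
  refine Finset.sum_congr rfl fun b hb => ?_
  refine Finset.sum_subset ?_ ?_
  · exact Finset.range_subset_range.mpr (by omega)
  · intro c _ hc
    simp only [Finset.mem_range, not_lt] at hc
    exact hF b c (by omega)

lemma moyalTerm_sum_left {α : Type*} (s : Finset α) (m : ℕ)
    (F : α → MvPolynomial (Fin n) k) (g : MvPolynomial (Fin n) k) :
    moyalTerm π m (∑ x ∈ s, F x) g = ∑ x ∈ s, moyalTerm π m (F x) g := by
  rw [moyalTerm]
  have h1 : ∀ iv jv : Fin m → Fin n,
      C (∏ r : Fin m, π (iv r) (jv r)) * iterPDeriv (List.ofFn iv) (∑ x ∈ s, F x) *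
        iterPDeriv (List.ofFn jv) g
      = ∑ x ∈ s, C (∏ r : Fin m, π (iv r) (jv r)) * iterPDeriv (List.ofFn iv) (F x) *
          iterPDeriv (List.ofFn jv) g := by
    intro iv jv
    rw [iterPDeriv_sum, Finset.mul_sum, Finset.sum_mul]
  rw [Finset.sum_congr rfl fun iv (_ : iv ∈ Finset.univ) =>
    Finset.sum_congr rfl fun jv (_ : jv ∈ Finset.univ) => h1 iv jv]
  rw [sum_sum_comm_finset s (fun iv jv x => C (∏ r : Fin m, π (iv r) (jv r)) *
    iterPDeriv (List.ofFn iv) (F x) * iterPDeriv (List.ofFn jv) g)]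
  rw [Finset.mul_sum]
  exact Finset.sum_congr rfl fun x _ => by rw [moyalTerm]

lemma moyal_assoc_left {N : ℕ} (f g h : MvPolynomial (Fin n) k)
    (h1 : f.totalDegree + g.totalDegree < N) (h2 : h.totalDegree < N) :
    moyalMul π (moyalMul π f g) h
      = ∑ a ∈ Finset.range N, ∑ b ∈ Finset.range N, ∑ c ∈ Finset.range N,
          moyalW π a b c f g h := by
  have hfg : (moyalMul π f g).totalDegree < N :=
    lt_of_le_of_lt (moyalMul_totalDegree_le π f g) h1
  rw [moyalMul_eq_sum π h hfg]
  rw [moyalMul_eq_sum π g (N := N) (by omega)]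
  have hmix : ∀ m ∈ Finset.range N,
      moyalTerm π m (∑ p ∈ Finset.range N, moyalTerm π p f g) h
        = ∑ p ∈ Finset.range N, ∑ b ∈ Finset.range (m+1), moyalW π p b (m - b) f g h := by
    intro m _
    rw [moyalTerm_sum_left]
    exact Finset.sum_congr rfl fun p _ => moyal_mixed π p m f g h
  rw [Finset.sum_congr rfl hmix, Finset.sum_comm]
  refine Finset.sum_congr rfl fun p _ => ?_
  exact triangle_rect N (fun b c => moyalW π p b c f g h)
    (fun b c hbc => moyalW_eq_zero_h π f g (by omega))

lemma moyalTerm_transpose (m : ℕ) (f g : MvPolynomial (Fin n) k) :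
    moyalTerm π m f g = moyalTerm (fun i j => π j i) m g f := by
  rw [moyalTerm, moyalTerm]
  congr 1
  rw [Finset.sum_comm]
  exact Finset.sum_congr rfl fun jv _ => Finset.sum_congr rfl fun iv _ => by ring

lemma moyalMul_transpose (f g : MvPolynomial (Fin n) k) :
    moyalMul π f g = moyalMul (fun i j => π j i) g f := by
  rw [moyalMul, moyalMul]
  exact finsum_congr fun m => moyalTerm_transpose π m f g

lemma sum6_reverse {M : Type*} [AddCommMonoid M] {α β γ : Type*}
    [Fintype α] [Fintype β] [Fintype γ]
    (Φ : α → α → β → β → γ → γ → M) :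
    ∑ u : α, ∑ v : α, ∑ w : β, ∑ x : β, ∑ y : γ, ∑ z : γ, Φ u v w x y z
      = ∑ z : γ, ∑ y : γ, ∑ x : β, ∑ w : β, ∑ v : α, ∑ u : α, Φ u v w x y z := by
  calc ∑ u : α, ∑ v : α, ∑ w : β, ∑ x : β, ∑ y : γ, ∑ z : γ, Φ u v w x y z
      = ∑ v : α, ∑ u : α, ∑ x : β, ∑ w : β, ∑ z : γ, ∑ y : γ, Φ u v w x y z := by
        rw [Finset.sum_comm]
        refine Finset.sum_congr rfl fun v _ => Finset.sum_congr rfl fun u _ => ?_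
        rw [Finset.sum_comm]
        refine Finset.sum_congr rfl fun x _ => Finset.sum_congr rfl fun w _ => ?_
        rw [Finset.sum_comm]
    _ = ∑ x : β, ∑ w : β, ∑ v : α, ∑ u : α, ∑ z : γ, ∑ y : γ, Φ u v w x y z :=
        sum_comm4 _
    _ = ∑ x : β, ∑ w : β, ∑ z : γ, ∑ y : γ, ∑ v : α, ∑ u : α, Φ u v w x y z :=
        Finset.sum_congr rfl fun x _ => Finset.sum_congr rfl fun w _ => sum_comm4 _
    _ = ∑ z : γ, ∑ y : γ, ∑ x : β, ∑ w : β, ∑ v : α, ∑ u : α, Φ u v w x y z :=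
        sum_comm4 _

lemma moyalW_transpose (a b c : ℕ) (f g h : MvPolynomial (Fin n) k) :
    moyalW (fun i j => π j i) a b c h g f = moyalW π c b a f g h := by
  rw [moyalW, moyalW]
  have hq : (1 / (a.factorial * b.factorial * c.factorial : ℚ))
      = (1 / (c.factorial * b.factorial * a.factorial : ℚ)) := by ring
  rw [hq]
  congr 1
  have expandL : ∀ u v : Fin a → Fin n,
      C (∏ r : Fin a, π (v r) (u r)) *
        moyalQ (fun i j => π j i) b c (iterPDeriv (List.ofFn u) h)
          (iterPDeriv (List.ofFn v) g) f
      = ∑ w : Fin b → Fin n, ∑ x : Fin b → Fin n, ∑ y : Fin c → Fin n, ∑ z : Fin c → Fin n,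
          C (∏ r : Fin a, π (v r) (u r)) *
            (C (∏ r : Fin b, π (x r) (w r)) * C (∏ r : Fin c, π (z r) (y r)) *
              iterPDeriv (List.ofFn w) (iterPDeriv (List.ofFn u) h) *
              iterPDeriv (List.ofFn y) (iterPDeriv (List.ofFn v) g) *
              iterPDeriv (List.ofFn x ++ List.ofFn z) f) := by
    intro u v
    rw [moyalQ]
    rw [mul_sum2 (C (∏ r : Fin a, π (v r) (u r))) _]
    refine Finset.sum_congr rfl fun w _ => Finset.sum_congr rfl fun x _ => ?_
    rw [mul_sum2 (C (∏ r : Fin a, π (v r) (u r))) _]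
  have expandR : ∀ u v : Fin c → Fin n,
      C (∏ r : Fin c, π (u r) (v r)) *
        moyalQ π b a (iterPDeriv (List.ofFn u) f) (iterPDeriv (List.ofFn v) g) h
      = ∑ w : Fin b → Fin n, ∑ x : Fin b → Fin n, ∑ y : Fin a → Fin n, ∑ z : Fin a → Fin n,
          C (∏ r : Fin c, π (u r) (v r)) *
            (C (∏ r : Fin b, π (w r) (x r)) * C (∏ r : Fin a, π (y r) (z r)) *
              iterPDeriv (List.ofFn w) (iterPDeriv (List.ofFn u) f) *
              iterPDeriv (List.ofFn y) (iterPDeriv (List.ofFn v) g) *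
              iterPDeriv (List.ofFn x ++ List.ofFn z) h) := by
    intro u v
    rw [moyalQ]
    rw [mul_sum2 (C (∏ r : Fin c, π (u r) (v r))) _]
    refine Finset.sum_congr rfl fun w _ => Finset.sum_congr rfl fun x _ => ?_
    rw [mul_sum2 (C (∏ r : Fin c, π (u r) (v r))) _]
  calc ∑ u : Fin a → Fin n, ∑ v : Fin a → Fin n,
        C (∏ r : Fin a, (fun i j => π j i) (u r) (v r)) *
          moyalQ (fun i j => π j i) b c (iterPDeriv (List.ofFn u) h)
            (iterPDeriv (List.ofFn v) g) f
      = ∑ u : Fin a → Fin n, ∑ v : Fin a → Fin n, ∑ w : Fin b → Fin n, ∑ x : Fin b → Fin n,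
          ∑ y : Fin c → Fin n, ∑ z : Fin c → Fin n,
          C (∏ r : Fin a, π (v r) (u r)) *
            (C (∏ r : Fin b, π (x r) (w r)) * C (∏ r : Fin c, π (z r) (y r)) *
              iterPDeriv (List.ofFn w) (iterPDeriv (List.ofFn u) h) *
              iterPDeriv (List.ofFn y) (iterPDeriv (List.ofFn v) g) *
              iterPDeriv (List.ofFn x ++ List.ofFn z) f) :=
        Finset.sum_congr rfl fun u _ => Finset.sum_congr rfl fun v _ => expandL u v
    _ = ∑ z : Fin c → Fin n, ∑ y : Fin c → Fin n, ∑ x : Fin b → Fin n, ∑ w : Fin b → Fin n,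
          ∑ v : Fin a → Fin n, ∑ u : Fin a → Fin n,
          C (∏ r : Fin a, π (v r) (u r)) *
            (C (∏ r : Fin b, π (x r) (w r)) * C (∏ r : Fin c, π (z r) (y r)) *
              iterPDeriv (List.ofFn w) (iterPDeriv (List.ofFn u) h) *
              iterPDeriv (List.ofFn y) (iterPDeriv (List.ofFn v) g) *
              iterPDeriv (List.ofFn x ++ List.ofFn z) f) :=
        sum6_reverse _
    _ = ∑ u : Fin c → Fin n, ∑ v : Fin c → Fin n,
          C (∏ r : Fin c, π (u r) (v r)) *
            moyalQ π b a (iterPDeriv (List.ofFn u) f) (iterPDeriv (List.ofFn v) g) h := by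
        refine Finset.sum_congr rfl fun z _ => Finset.sum_congr rfl fun y _ => ?_
        rw [expandR z y]
        refine Finset.sum_congr rfl fun x _ => Finset.sum_congr rfl fun w _ => ?_
        refine Finset.sum_congr rfl fun v _ => Finset.sum_congr rfl fun u _ => ?_
        rw [← iterPDeriv_append, ← iterPDeriv_append, iterPDeriv_append_comm (List.ofFn y)]
        rw [iterPDeriv_append (List.ofFn x) (List.ofFn z) f,
          iterPDeriv_append (List.ofFn v) (List.ofFn y) g,
          iterPDeriv_append (List.ofFn w) (List.ofFn u) h]
        ring

lemma sum3_reverse {M : Type*} [AddCommMonoid M] (s t r : Finset ℕ) (F : ℕ → ℕ → ℕ → M) :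
    ∑ a ∈ s, ∑ b ∈ t, ∑ c ∈ r, F a b c = ∑ c ∈ r, ∑ b ∈ t, ∑ a ∈ s, F a b c := by
  calc ∑ a ∈ s, ∑ b ∈ t, ∑ c ∈ r, F a b c
      = ∑ a ∈ s, ∑ c ∈ r, ∑ b ∈ t, F a b c :=
        Finset.sum_congr rfl fun a _ => Finset.sum_comm
    _ = ∑ c ∈ r, ∑ a ∈ s, ∑ b ∈ t, F a b c := Finset.sum_comm
    _ = ∑ c ∈ r, ∑ b ∈ t, ∑ a ∈ s, F a b c :=
        Finset.sum_congr rfl fun c _ => Finset.sum_comm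

end Key


/-- over a commutative `ℚ`-algebra `k`, for any constant matrix `π`,
the Moyal-type product `⋆` on the polynomial algebra `k[x_1,…,x_n]` is associative and
has `1` as a two-sided unit. -/
theorem moyalMul_assoc_and_unital
    {k : Type*} [CommRing k] [Algebra ℚ k] {n : ℕ} (π : Fin n → Fin n → k) :
    (∀ f g h : MvPolynomial (Fin n) k,
      moyalMul π (moyalMul π f g) h = moyalMul π f (moyalMul π g h)) ∧
    (∀ f : MvPolynomial (Fin n) k, moyalMul π 1 f = f ∧ moyalMul π f 1 = f) := by
  constructor
  · intro f g h
    set N := f.totalDegree + g.totalDegree + h.totalDegree + 1 with hN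
    have hL : moyalMul π (moyalMul π f g) h
        = ∑ a ∈ Finset.range N, ∑ b ∈ Finset.range N, ∑ c ∈ Finset.range N,
            moyalW π a b c f g h :=
      moyal_assoc_left π f g h (by omega) (by omega)
    have hR : moyalMul π f (moyalMul π g h)
        = ∑ a ∈ Finset.range N, ∑ b ∈ Finset.range N, ∑ c ∈ Finset.range N,
            moyalW (fun i j => π j i) a b c h g f := by
      rw [moyalMul_transpose π f (moyalMul π g h), moyalMul_transpose π g h]
      exact moyal_assoc_left (fun i j => π j i) h g f (by omega) (by omega)
    rw [hL, hR]
    rw [Finset.sum_congr rfl fun a (_ : a ∈ Finset.range N) =>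
      Finset.sum_congr rfl fun b (_ : b ∈ Finset.range N) =>
        Finset.sum_congr rfl fun c (_ : c ∈ Finset.range N) =>
          moyalW_transpose π a b c f g h]
    rw [sum3_reverse (Finset.range N) (Finset.range N) (Finset.range N)
      (fun a b c => moyalW π c b a f g h)]
  · intro f
    exact ⟨moyalMul_one_left π f, moyalMul_one_right π f⟩
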